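/- Let a(y) = max(0, 1−|y|) be the tent function, and for α > 0, r ∈ ℝ set a_α(y) = (1/α)·a(y/α) and a^r_α(y) = (1/α)·a((y−r)/α). Fix (x₁,x₂) ∈ ℝ × (0,∞) and r ∈ ℝ. Then for every α > 0, γ^{a^r_{α/(2√x₂)}}(x₁,x₂) = 2√x₂ · ((H H^T) * a_α)(x₁ + 2√x₂ r), i.e., each (j,k) entry equals 2√x₂ · ((h_{j−1}h_{k−1}) * a_α)(x₁ + 2√x₂ r); consequently lim_{α→0⁺} γ^{a^r_{α/(2√x₂)}}(x₁,x₂) = 2√x₂ · H(x₁ + 2√x₂ r)[H(x₁ + 2√x₂ r)]^T. -/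

import Mathlib

open MeasureTheory Filter Topology
open scoped Convolution

noncomputable section

/-- The physicists' Hermite polynomial `H_m(y) = (−1)^m e^{y²} (d/dy)^m e^{−y²}`. -/
def hermiteH (m : ℕ) (y : ℝ) : ℝ :=
  (-1 : ℝ) ^ m * Real.exp (y ^ 2) * iteratedDeriv m (fun x => Real.exp (-x ^ 2)) y

/-- The Hermite function `h_m(y) = (2^m m! √π)^{−1/2} H_m(y) e^{−y²/2}`. -/
def hermiteFun (m : ℕ) (y : ℝ) : ℝ :=
  (Real.sqrt (2 ^ m * m.factorial * Real.sqrt Real.pi))⁻¹ * hermiteH m y *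
    Real.exp (-y ^ 2 / 2)

/-- The matrix `H(y)[H(y)]ᵀ`, where `H(y) = (h_0(y), …, h_{n−1}(y))ᵀ`. -/
def HHT (n : ℕ) (y : ℝ) : Matrix (Fin n) (Fin n) ℝ :=
  Matrix.of fun j k : Fin n => hermiteFun j y * hermiteFun k y

/-- `γ^a(x₁,x₂) = ∫_ℝ a((−x₁+y)/(2√x₂)) H(y)[H(y)]ᵀ dy` as a complex `n × n` matrix. -/
def gammaA (n : ℕ) (a : ℝ → ℂ) (x₁ x₂ : ℝ) : Matrix (Fin n) (Fin n) ℂ :=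
  Matrix.of fun j k : Fin n =>
    ∫ y : ℝ, a ((-x₁ + y) / (2 * Real.sqrt x₂)) * (HHT n y j k : ℂ)

/-- The tent function `a(y) = max(0, 1 − |y|)`. -/
def tent (y : ℝ) : ℝ := max 0 (1 - |y|)

/-- `a^r_α(y) = (1/α) a((y − r)/α)`. -/
def tentShift (α r y : ℝ) : ℝ := (1 / α) * tent ((y - r) / α)

/-- Convolution on `ℝ`: `(f ⋆ g)(x) = ∫ f(x − y) g(y) dy`. -/
def conv (f g : ℝ → ℝ) (x : ℝ) : ℝ := ∫ y : ℝ, f (x - y) * g y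

lemma tent_nonneg (y : ℝ) : 0 ≤ tent y := le_max_left _ _

lemma tent_neg (y : ℝ) : tent (-y) = tent y := by simp [tent]

lemma tent_eq_indicator :
    tent = Set.indicator (Set.Icc (-1 : ℝ) 1) (fun y => 1 - |y|) := by
  funext y
  by_cases h : y ∈ Set.Icc (-1 : ℝ) 1
  · rw [Set.indicator_of_mem h]
    have h1 : |y| ≤ 1 := abs_le.2 ⟨h.1, h.2⟩
    simp only [tent]
    rw [max_eq_right (by linarith : (0:ℝ) ≤ 1 - |y|)]
  · rw [Set.indicator_of_notMem h]
    have h1 : 1 < |y| := by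
      rcases lt_or_ge y (-1) with h' | h'
      · rw [abs_of_neg (by linarith)]; linarith
      · have : 1 < y := by
          by_contra hy
          exact h ⟨h', le_of_not_gt hy⟩
        rw [abs_of_pos (by linarith)]; exact this
    simp only [tent]
    rw [max_eq_left (by linarith : 1 - |y| ≤ (0:ℝ))]

lemma integral_tent : ∫ y : ℝ, tent y = 1 := by
  rw [tent_eq_indicator, MeasureTheory.integral_indicator measurableSet_Icc,
    MeasureTheory.integral_Icc_eq_integral_Ioc, ← intervalIntegral.integral_of_le (by norm_num)]
  have h1 : (∫ y in (-1 : ℝ)..0, (1 - |y|)) = ∫ y in (-1 : ℝ)..0, (1 + y) := by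
    apply intervalIntegral.integral_congr
    intro y hy
    rw [Set.uIcc_of_le (by norm_num)] at hy
    simp [abs_of_nonpos hy.2]
  have h2 : (∫ y in (0 : ℝ)..1, (1 - |y|)) = ∫ y in (0 : ℝ)..1, (1 - y) := by
    apply intervalIntegral.integral_congr
    intro y hy
    rw [Set.uIcc_of_le (by norm_num)] at hy
    simp [abs_of_nonneg hy.1]
  rw [← intervalIntegral.integral_add_adjacent_intervals (a := (-1:ℝ)) (b := 0) (c := 1)
    (Continuous.intervalIntegrable (by continuity) _ _)
    (Continuous.intervalIntegrable (by continuity) _ _), h1, h2]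
  have e1 : (∫ y in (-1 : ℝ)..0, (1 + y)) = 1/2 := by
    rw [intervalIntegral.integral_add intervalIntegrable_const
      (Continuous.intervalIntegrable (by continuity) _ _),
      intervalIntegral.integral_const, integral_id]
    norm_num
  have e2 : (∫ y in (0 : ℝ)..1, (1 - y)) = 1/2 := by
    rw [intervalIntegral.integral_sub intervalIntegrable_const
      (Continuous.intervalIntegrable (by continuity) _ _),
      intervalIntegral.integral_const, integral_id]
    norm_num
  rw [e1, e2]; norm_num

lemma integral_tentShift {α : ℝ} (hα : 0 < α) : ∫ y : ℝ, tentShift α 0 y = 1 := by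
  simp only [tentShift, sub_zero]
  rw [MeasureTheory.integral_const_mul,
    MeasureTheory.Measure.integral_comp_div (fun y => tent y) α, integral_tent]
  simp [abs_of_pos hα]
  field_simp

lemma tentShift_support {α : ℝ} (hα : 0 < α) :
    Function.support (tentShift α 0) ⊆ Metric.ball (0 : ℝ) α := by
  intro y hy
  simp only [Function.mem_support, tentShift, sub_zero] at hy
  have ht : tent (y / α) ≠ 0 := fun h => hy (by rw [h, mul_zero])
  have h1 : |y / α| < 1 := by
    by_contra h
    apply ht
    have h2 : 1 ≤ |y / α| := le_of_not_gt h
    simp only [tent]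
    rw [max_eq_left (by linarith : 1 - |y / α| ≤ (0:ℝ))]
  rw [abs_div, abs_of_pos hα, div_lt_one hα] at h1
  simpa [Real.dist_eq] using h1

lemma continuous_hermiteFun (m : ℕ) : Continuous (hermiteFun m) := by
  have hg : ContDiff ℝ ⊤ (fun x : ℝ => Real.exp (-x ^ 2)) :=
    Real.contDiff_exp.comp ((contDiff_id.pow 2).neg)
  have h1 : Continuous (iteratedDeriv m (fun x : ℝ => Real.exp (-x ^ 2))) :=
    hg.continuous_iteratedDeriv m le_top
  have hH : Continuous (hermiteH m) :=
    (continuous_const.mul (Real.continuous_exp.comp (continuous_pow 2))).mul h1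
  exact (continuous_const.mul hH).mul
    (Real.continuous_exp.comp (((continuous_pow 2).neg).div_const 2))

/-- Approximate identity property of the tent family. -/
lemma tendsto_conv_tentShift (f : ℝ → ℝ) (hf : Continuous f) (x : ℝ) :
    Tendsto (fun α => conv f (tentShift α 0) x) (𝓝[>] (0 : ℝ)) (𝓝 (f x)) := by
  have heq : ∀ α : ℝ, conv f (tentShift α 0) x =
      ((fun y => tentShift α 0 y) ⋆[ContinuousLinearMap.lsmul ℝ ℝ, volume] f) x := by
    intro α
    rw [MeasureTheory.convolution_def]
    simp only [ContinuousLinearMap.lsmul_apply, smul_eq_mul]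
    exact integral_congr_ae (Filter.Eventually.of_forall fun y => mul_comm _ _)
  simp only [heq]
  apply MeasureTheory.convolution_tendsto_right
    (g := fun _ : ℝ => f) (k := fun _ : ℝ => x) (x₀ := x)
  · filter_upwards [self_mem_nhdsWithin] with α hα
    intro y
    have hα' : (0:ℝ) < α := hα
    exact mul_nonneg (by positivity) (tent_nonneg _)
  · filter_upwards [self_mem_nhdsWithin] with α hα
    exact integral_tentShift hα
  · rw [tendsto_smallSets_iff]
    intro s hs
    obtain ⟨ε, hε, hball⟩ := Metric.mem_nhds_iff.1 hs
    filter_upwards [Ioo_mem_nhdsGT_of_mem ⟨le_refl (0:ℝ), hε⟩] with α hα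
    exact (tentShift_support hα.1).trans ((Metric.ball_subset_ball hα.2.le).trans hball)
  · exact Filter.Eventually.of_forall fun _ => hf.aestronglyMeasurable
  · exact (hf.tendsto x).comp tendsto_snd
  · exact tendsto_const_nhds

/-- For the tent symbols `a^r_{α/(2√x₂)}`, the matrix
`γ^{a^r_{α/(2√x₂)}}(x₁,x₂)` equals `2√x₂ ((H Hᵀ) ⋆ a_α)(x₁ + 2√x₂ r)` entrywise, and
as `α → 0⁺` it converges to `2√x₂ H(x₁+2√x₂ r)[H(x₁+2√x₂ r)]ᵀ`. -/
theorem gammaA_tent_convolution (n : ℕ) (hn : 1 ≤ n) (x₁ x₂ : ℝ) (hx₂ : 0 < x₂)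
    (r : ℝ) :
    (∀ α : ℝ, 0 < α →
      gammaA n (fun y => ((tentShift (α / (2 * Real.sqrt x₂)) r y : ℝ) : ℂ)) x₁ x₂ =
        Matrix.of fun j k : Fin n =>
          ((2 * Real.sqrt x₂ *
            conv (fun s => hermiteFun j s * hermiteFun k s) (tentShift α 0)
              (x₁ + 2 * Real.sqrt x₂ * r) : ℝ) : ℂ)) ∧
    Tendsto
      (fun α : ℝ =>
        gammaA n (fun y => ((tentShift (α / (2 * Real.sqrt x₂)) r y : ℝ) : ℂ)) x₁ x₂)
      (𝓝[>] (0 : ℝ))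
      (𝓝 (Matrix.of fun j k : Fin n =>
        ((2 * Real.sqrt x₂ * (hermiteFun j (x₁ + 2 * Real.sqrt x₂ * r) *
          hermiteFun k (x₁ + 2 * Real.sqrt x₂ * r)) : ℝ) : ℂ))) := by
  set β := 2 * Real.sqrt x₂ with hβdef
  have hβ : 0 < β := by
    have := Real.sqrt_pos.2 hx₂
    positivity
  set x : ℝ := x₁ + β * r with hxdef
  have hpart1 : ∀ α : ℝ, 0 < α →
      gammaA n (fun y => ((tentShift (α / β) r y : ℝ) : ℂ)) x₁ x₂ =
        Matrix.of fun j k : Fin n =>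
          ((β * conv (fun s => hermiteFun j s * hermiteFun k s) (tentShift α 0) x : ℝ) : ℂ) := by
    intro α hα
    ext j k
    simp only [gammaA, Matrix.of_apply, HHT]
    have key : ∀ y : ℝ, tentShift (α / β) r ((-x₁ + (x - y)) / β) = β * tentShift α 0 y := by
      intro y
      simp only [tentShift, sub_zero]
      have h1 : ((-x₁ + (x - y)) / β - r) / (α / β) = -(y / α) := by
        rw [hxdef]; field_simp; ring
      rw [h1, tent_neg]
      field_simp
    have hreal : (∫ y : ℝ, tentShift (α / β) r ((-x₁ + y) / β) *
        (hermiteFun j y * hermiteFun k y)) =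
        β * conv (fun s => hermiteFun j s * hermiteFun k s) (tentShift α 0) x := by
      rw [← MeasureTheory.integral_sub_left_eq_self
        (fun y => tentShift (α / β) r ((-x₁ + y) / β) * (hermiteFun j y * hermiteFun k y))
        volume x]
      rw [conv, ← MeasureTheory.integral_const_mul]
      apply integral_congr_ae
      apply Filter.Eventually.of_forall
      intro y
      simp only []
      rw [key y]
      ring
    calc (∫ y : ℝ, ((tentShift (α / β) r ((-x₁ + y) / β) : ℝ) : ℂ) *
            ((hermiteFun j y * hermiteFun k y : ℝ) : ℂ))
        = ∫ y : ℝ, ((tentShift (α / β) r ((-x₁ + y) / β) *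
            (hermiteFun j y * hermiteFun k y) : ℝ) : ℂ) := by
          simp only [Complex.ofReal_mul]
      _ = ((∫ y : ℝ, tentShift (α / β) r ((-x₁ + y) / β) *
            (hermiteFun j y * hermiteFun k y) : ℝ) : ℂ) := integral_ofReal
      _ = _ := by rw [hreal]
  refine ⟨hpart1, ?_⟩
  have htend : Tendsto
      (fun α : ℝ => Matrix.of fun j k : Fin n =>
        ((β * conv (fun s => hermiteFun j s * hermiteFun k s) (tentShift α 0) x : ℝ) : ℂ))
      (𝓝[>] (0 : ℝ))
      (𝓝 (Matrix.of fun j k : Fin n =>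
        ((β * (hermiteFun j x * hermiteFun k x) : ℝ) : ℂ))) := by
    apply tendsto_pi_nhds.2
    intro j
    rw [tendsto_pi_nhds]
    intro k
    simp only [Matrix.of_apply]
    have hc : Continuous fun s => hermiteFun j s * hermiteFun k s :=
      (continuous_hermiteFun j).mul (continuous_hermiteFun k)
    exact (Complex.continuous_ofReal.tendsto _).comp
      ((tendsto_conv_tentShift _ hc x).const_mul β)
  apply htend.congr'
  filter_upwards [self_mem_nhdsWithin] with α hα
  exact (hpart1 α hα).symm
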